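/- Let (A,B) with A ∈ ℝ^{n×n}, B ∈ ℝ^{n×m} be controllable, i.e., rank [B, AB, …, A^{n-1}B] = n. Let B = Q₁R be a QR decomposition with Q = [Q₁ Q₂] orthogonal, Q₁ ∈ ℝ^{n×m}, Q₂ ∈ ℝ^{n×(n-m)}, and R ∈ ℝ^{m×m} nonsingular. Then for every λ ∈ ℂ, the matrix M₁ = Q₂ᵀ(A - λIₙ) ∈ ℂ^{(n-m)×n} has full row rank n - m; equivalently, the null space of M₁ has dimension m. -/

import Mathlib

open Matrix

/-- Full column rank implies `mulVecLin` is injective. -/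
lemma mulVecLin_injective_of_rank {K : Type*} [Field K] {a : Type*} [Fintype a] {b : ℕ}
    (M : Matrix a (Fin b) K) (h : M.rank = b) : Function.Injective M.mulVecLin := by
  rw [← LinearMap.ker_eq_bot]
  have h1 := LinearMap.finrank_range_add_finrank_ker M.mulVecLin
  rw [Matrix.rank] at h
  rw [h, Module.finrank_fin_fun] at h1
  have : Module.finrank K (LinearMap.ker M.mulVecLin) = 0 := by omega
  exact Submodule.finrank_eq_zero.mp this

/-- If `(A,B)` is controllable and the columns of `Q₂` span the orthogonal complement of
the range of `B = Q₁R`, then `Q₂ᵀ(A - λI)` has full row rank for every `λ ∈ ℂ`. -/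
theorem stmt4 (n m p : ℕ) (hmp : m + p = n)
    (A : Matrix (Fin n) (Fin n) ℝ) (B : Matrix (Fin n) (Fin m) ℝ)
    (hctrb : (Matrix.of fun (i : Fin n) (q : Fin n × Fin m) =>
      (A ^ (q.1 : ℕ) * B) i q.2).rank = n)
    (Q₁ : Matrix (Fin n) (Fin m) ℝ) (Q₂ : Matrix (Fin n) (Fin p) ℝ)
    (R : Matrix (Fin m) (Fin m) ℝ) (hR : IsUnit R.det)
    (hQ : (Matrix.fromCols Q₁ Q₂)ᵀ * Matrix.fromCols Q₁ Q₂ = 1)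
    (hB : B = Q₁ * R) (lam : ℂ) :
    ((Q₂.map Complex.ofReal)ᵀ * (A.map Complex.ofReal - lam • 1)).rank = p := by
  classical
  -- extract block identities from hQ
  rw [Matrix.transpose_fromCols, Matrix.fromRows_mul_fromCols,
    ← Matrix.fromBlocks_one, Matrix.fromBlocks_inj] at hQ
  obtain ⟨hQ11, hQ12, hQ21, hQ22⟩ := hQ
  set f : ℝ →+* ℂ := Complex.ofRealHom with hf
  set Ac : Matrix (Fin n) (Fin n) ℂ := A.map Complex.ofReal with hAc
  set Q₂c : Matrix (Fin n) (Fin p) ℂ := Q₂.map Complex.ofReal with hQ₂c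
  set C : Matrix (Fin n) (Fin n × Fin m) ℝ := Matrix.of fun (i : Fin n) (q : Fin n × Fin m) =>
      (A ^ (q.1 : ℕ) * B) i q.2 with hC
  -- injectivity of the transposed controllability matrix
  have hCrank : (Cᵀ).rank = n := by rw [Matrix.rank_transpose]; exact hctrb
  have hCinj : Function.Injective (Cᵀ).mulVecLin := mulVecLin_injective_of_rank _ hCrank
  -- main injectivity claim
  have hinj : Function.Injective ((Q₂c ᵀ * (Ac - lam • 1))ᵀ).mulVecLin := by
    rw [← LinearMap.ker_eq_bot, LinearMap.ker_eq_bot']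
    intro v hv
    rw [Matrix.mulVecLin_apply] at hv
    set w : Fin n → ℂ := Q₂c *ᵥ v with hw
    have hvw : (Ac - lam • 1)ᵀ *ᵥ w = 0 := by
      rw [Matrix.transpose_mul] at hv
      rw [hw, Matrix.mulVec_mulVec]
      exact hv
    have hAw : w ᵥ* Ac = lam • w := by
      have := hvw
      rw [Matrix.transpose_sub, Matrix.sub_mulVec, sub_eq_zero, Matrix.transpose_smul,
        Matrix.transpose_one, Matrix.smul_mulVec, Matrix.one_mulVec,
        Matrix.mulVec_transpose] at this
      exact this
    have hBw : w ᵥ* (B.map Complex.ofReal) = 0 := by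
      have hBmap : B.map Complex.ofReal = Q₁.map Complex.ofReal * R.map Complex.ofReal := by
        rw [hB]; exact Matrix.map_mul (f := f)
      rw [hBmap, ← Matrix.vecMul_vecMul]
      have : w ᵥ* Q₁.map Complex.ofReal = 0 := by
        rw [hw, ← Matrix.mulVec_transpose, ← Matrix.transpose_map, Matrix.mulVec_mulVec]
        have : Q₁ᵀ.map Complex.ofReal * Q₂c = (Q₁ᵀ * Q₂).map Complex.ofReal := by
          rw [hQ₂c]; exact (Matrix.map_mul (f := f)).symm
        rw [this, hQ12, Matrix.map_zero _ Complex.ofReal_zero, Matrix.zero_mulVec]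
      rw [this, Matrix.zero_vecMul]
    -- w annihilates the whole controllability matrix
    have hpow : ∀ k : ℕ, w ᵥ* Ac ^ k = lam ^ k • w := by
      intro k
      induction k with
      | zero => simp
      | succ k ih =>
        rw [pow_succ, ← Matrix.vecMul_vecMul, ih, Matrix.smul_vecMul, hAw, smul_smul,
          pow_succ]
    have hAkB : ∀ k : ℕ, w ᵥ* ((A ^ k * B).map Complex.ofReal) = 0 := by
      intro k
      have hmap : (A ^ k * B).map Complex.ofReal = Ac ^ k * B.map Complex.ofReal := by
        have := map_pow (f.mapMatrix : Matrix (Fin n) (Fin n) ℝ →+* Matrix (Fin n) (Fin n) ℂ) A k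
        simp only [RingHom.mapMatrix_apply] at this
        have hfun : ⇑f = Complex.ofReal := funext fun r => Complex.ofRealHom_eq_coe r
        rw [hfun] at this
        rw [hAc, ← this]; exact Matrix.map_mul (f := f)
      rw [hmap, ← Matrix.vecMul_vecMul, hpow, Matrix.smul_vecMul, hBw, smul_zero]
    -- split into real and imaginary parts
    have hre : Cᵀ *ᵥ (fun i => (w i).re) = 0 := by
      funext q
      have h0 := congrFun (hAkB q.1) q.2
      simp only [Matrix.vecMul, dotProduct, Pi.zero_apply] at h0
      have := congrArg Complex.re h0
      rw [Complex.re_sum] at this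
      simpa [Matrix.mulVec, dotProduct, hC, mul_comm] using this
    have him : Cᵀ *ᵥ (fun i => (w i).im) = 0 := by
      funext q
      have h0 := congrFun (hAkB q.1) q.2
      simp only [Matrix.vecMul, dotProduct, Pi.zero_apply] at h0
      have := congrArg Complex.im h0
      rw [Complex.im_sum] at this
      simpa [Matrix.mulVec, dotProduct, hC, mul_comm] using this
    have hw0 : w = 0 := by
      have h1 : (fun i => (w i).re) = 0 := hCinj (by
        rw [Matrix.mulVecLin_apply, Matrix.mulVecLin_apply, hre, Matrix.mulVec_zero])
      have h2 : (fun i => (w i).im) = 0 := hCinj (by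
        rw [Matrix.mulVecLin_apply, Matrix.mulVecLin_apply, him, Matrix.mulVec_zero])
      funext i
      exact Complex.ext (congrFun h1 i) (congrFun h2 i)
    -- conclude v = 0 using Q₂ᵀ Q₂ = 1
    have : Q₂c ᵀ *ᵥ (Q₂c *ᵥ v) = 0 := by rw [← hw, hw0, Matrix.mulVec_zero]
    rw [Matrix.mulVec_mulVec] at this
    have hQc : Q₂c ᵀ * Q₂c = 1 := by
      rw [hQ₂c, ← Matrix.transpose_map]
      rw [show Q₂ᵀ.map Complex.ofReal * Q₂.map Complex.ofReal
            = (Q₂ᵀ * Q₂).map Complex.ofReal from (Matrix.map_mul (f := f)).symm,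
        hQ22, Matrix.map_one _ Complex.ofReal_zero Complex.ofReal_one]
    rw [hQc, Matrix.one_mulVec] at this
    exact this
  rw [← Matrix.rank_transpose, Matrix.rank, LinearMap.finrank_range_of_inj hinj,
    Module.finrank_fin_fun]
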